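/- arXiv:2007.08564 — 7 statements merged into one kernel-verified Lean document; each statement's English description precedes it below -/
import Mathlib

section
/- Let (T_n)_{n≥0} be nonnegative reals and (D_n)_{n≥1} be positive reals; set t'_0 = 0 and t'_n = t'_{n-1} + D_n, and define the age sample path Δ(t) = T_{n-1} + (t − t'_{n-1}) for t ∈ (t'_{n-1}, t'_n], n ≥ 1. If (1/n)∑_{j=1}^n (T_{j-1} D_j + D_j²/2) converges to a limit Q̄ and (1/n)∑_{j=1}^n D_j converges to a limit D̄ > 0 as n → ∞, then (1/t'_n) ∫_0^{t'_n} Δ(t) dt converges to Q̄ / D̄ as n → ∞. -/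
open Filter MeasureTheory

/-- Sample-path version of the time-average age formula
`Δ = (E[D_n T_{n-1}] + E[D_n²]/2) / E[D_n]`: if the sawtooth age process
`Δ(t) = T_{n-1} + (t - t'_{n-1})` on `(t'_{n-1}, t'_n]` (with delivery times
`t'_n = t'_{n-1} + D_n`, `t'_0 = 0`) has Cesàro-convergent trapezoid areas and
inter-departure times, then the time average `(1/t'_n) ∫_0^{t'_n} Δ(t) dt`
converges to `Q̄ / D̄`. -/
theorem time_average_age_of_sawtooth
    (T D : ℕ → ℝ) (t' : ℕ → ℝ) (Δ : ℝ → ℝ) (Qbar Dbar : ℝ)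
    (hT : ∀ n, 0 ≤ T n)
    (hD : ∀ n : ℕ, 1 ≤ n → 0 < D n)
    (ht0 : t' 0 = 0)
    (ht : ∀ n : ℕ, t' (n + 1) = t' n + D (n + 1))
    (hΔ : ∀ n : ℕ, ∀ t ∈ Set.Ioc (t' n) (t' (n + 1)), Δ t = T n + (t - t' n))
    (hQ : Tendsto (fun n : ℕ =>
        (1 / (n : ℝ)) * ∑ j ∈ Finset.range n, (T j * D (j + 1) + (D (j + 1)) ^ 2 / 2))
      atTop (nhds Qbar))
    (hDbar : Tendsto (fun n : ℕ => (1 / (n : ℝ)) * ∑ j ∈ Finset.range n, D (j + 1))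
      atTop (nhds Dbar))
    (hDpos : 0 < Dbar) :
    Tendsto (fun n : ℕ => (1 / t' n) * ∫ t in (0:ℝ)..(t' n), Δ t)
      atTop (nhds (Qbar / Dbar)) := by
  have hle : ∀ j : ℕ, t' j ≤ t' (j + 1) := fun j => by
    have := hD (j + 1) (by omega); rw [ht]; linarith
  have hintOn : ∀ j : ℕ, IntegrableOn Δ (Set.Ioc (t' j) (t' (j + 1))) := by
    intro j
    have hcont : IntegrableOn (fun t => T j + (t - t' j))
        (Set.Ioc (t' j) (t' (j + 1))) :=
      (Continuous.integrableOn_Ioc (by continuity))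
    exact hcont.congr_fun (fun t htm => (hΔ j t htm).symm) measurableSet_Ioc
  have hii : ∀ j : ℕ, IntervalIntegrable Δ volume (t' j) (t' (j + 1)) := fun j =>
    (intervalIntegrable_iff_integrableOn_Ioc_of_le (hle j)).2 (hintOn j)
  have hval : ∀ j : ℕ, (∫ t in (t' j)..(t' (j + 1)), Δ t)
      = T j * D (j + 1) + (D (j + 1)) ^ 2 / 2 := by
    intro j
    rw [intervalIntegral.integral_of_le (hle j),
      setIntegral_congr_fun measurableSet_Ioc (fun t htm => hΔ j t htm),
      ← intervalIntegral.integral_of_le (hle j)]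
    have h1 : (∫ t in (t' j)..(t' (j + 1)), (T j + (t - t' j)))
        = (∫ t in (t' j)..(t' (j + 1)), ((T j - t' j) + t)) := by
      congr 1; funext t; ring
    rw [h1, intervalIntegral.integral_add intervalIntegrable_const
      intervalIntegral.intervalIntegrable_id, intervalIntegral.integral_const, integral_id, ht]
    simp only [smul_eq_mul]
    ring
  have hsum : ∀ n : ℕ, (∫ t in (0:ℝ)..(t' n), Δ t)
      = ∑ j ∈ Finset.range n, (T j * D (j + 1) + (D (j + 1)) ^ 2 / 2) := by
    intro n
    rw [← ht0, ← intervalIntegral.sum_integral_adjacent_intervals (fun j _ => hii j)]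
    exact Finset.sum_congr rfl fun j _ => hval j
  have htsum : ∀ n : ℕ, t' n = ∑ j ∈ Finset.range n, D (j + 1) := by
    intro n
    induction n with
    | zero => simp [ht0]
    | succ k ih => rw [ht, Finset.sum_range_succ, ih]
  have htpos : ∀ n : ℕ, 1 ≤ n → 0 < t' n := by
    intro n hn
    rw [htsum]
    apply Finset.sum_pos (fun j _ => hD (j + 1) (by omega))
    exact Finset.nonempty_range_iff.mpr (by omega)
  have hlim : Tendsto (fun n : ℕ =>
      ((1 / (n : ℝ)) * ∑ j ∈ Finset.range n, (T j * D (j + 1) + (D (j + 1)) ^ 2 / 2))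
        / ((1 / (n : ℝ)) * ∑ j ∈ Finset.range n, D (j + 1)))
      atTop (nhds (Qbar / Dbar)) := hQ.div hDbar (ne_of_gt hDpos)
  refine hlim.congr' ?_
  filter_upwards [eventually_ge_atTop 1] with n hn
  have hnpos : (0 : ℝ) < n := by exact_mod_cast hn
  have htp := htpos n hn
  rw [hsum, htsum]
  rw [htsum] at htp
  field_simp
  exact Finset.sum_congr rfl fun j _ => by ring
end

section
/- For every ρ ∈ (0,1), the FCFS M/D/1 average age is strictly smaller than the FCFS M/M/1 average age at the same load: (1/(2(1−ρ)) + 1/2 + (1−ρ)·exp(ρ)/ρ) < (1 + 1/ρ + ρ²/(1−ρ)). -/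
/-- For every offered load `ρ ∈ (0,1)` (with unit service rate), the FCFS M/D/1
average age is strictly smaller than the FCFS M/M/1 average age. -/
theorem md1_age_lt_mm1_age :
    ∀ ρ ∈ Set.Ioo (0 : ℝ) 1,
      1 / (2 * (1 - ρ)) + 1 / 2 + (1 - ρ) * Real.exp ρ / ρ
        < 1 + 1 / ρ + ρ ^ 2 / (1 - ρ) := by
  rintro ρ ⟨hρ, h1⟩
  have hs : (0:ℝ) < 1 - ρ := by linarith
  have habs : |ρ| ≤ 1 := by rw [abs_of_pos hρ]; linarith
  have hb := Real.exp_bound habs (by norm_num : 0 < 3)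
  have hsum : ∑ i ∈ Finset.range 3, ρ ^ i / (Nat.factorial i : ℝ)
      = 1 + ρ + ρ ^ 2 / 2 := by
    simp [Finset.sum_range_succ, Nat.factorial]
  rw [hsum, abs_of_pos hρ] at hb
  have hexp : Real.exp ρ ≤ 1 + ρ + ρ ^ 2 / 2 + ρ ^ 3 / 2 := by
    have h3 : ρ ^ 3 * ((3 + 1 : ℕ) / ((Nat.factorial 3 : ℝ) * 3)) ≤ ρ ^ 3 / 2 := by
      have : (0:ℝ) ≤ ρ ^ 3 := by positivity
      norm_num [Nat.factorial]
      nlinarith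
    have := abs_le.1 hb
    nlinarith [this.2]
  have hkey : (1 - ρ) ^ 2 * Real.exp ρ < 1 - ρ - ρ ^ 2 / 2 + ρ ^ 3 := by
    have hP : (1 - ρ) ^ 2 * Real.exp ρ ≤ (1 - ρ) ^ 2 * (1 + ρ + ρ ^ 2 / 2 + ρ ^ 3 / 2) :=
      mul_le_mul_of_nonneg_left hexp (by positivity)
    nlinarith [pow_pos hρ 4, pow_pos hρ 3, mul_pos (pow_pos hρ 4) hs]
  have hρ' : ρ ≠ 0 := ne_of_gt hρ
  have hs' : (1 - ρ) ≠ 0 := ne_of_gt hs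
  have hEq : (1 + 1 / ρ + ρ ^ 2 / (1 - ρ))
      - (1 / (2 * (1 - ρ)) + 1 / 2 + (1 - ρ) * Real.exp ρ / ρ)
      = ((1 - ρ - ρ ^ 2 / 2 + ρ ^ 3) - (1 - ρ) ^ 2 * Real.exp ρ) / (ρ * (1 - ρ)) := by
    field_simp
    ring
  have hpos := div_pos (sub_pos.2 hkey) (mul_pos hρ hs)
  linarith [hEq ▸ hpos]
end

section
/- For every ρ > 0 and μ > 0, the packet-management M/M/1 queue ages satisfy Δ_{M/M/1*}(ρ) ≤ Δ_{M/M/1/1}(ρ), Δ_{M/M/1*}(ρ) ≤ Δ_{M/M/1/2*}(ρ), and Δ_{M/M/1/2*}(ρ) ≤ Δ_{M/M/1/2}(ρ). -/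
/-- Comparisons of packet-management M/M/1 ages: for all `ρ > 0` and `μ > 0`,
`Δ_{M/M/1*} ≤ Δ_{M/M/1/1}`, `Δ_{M/M/1*} ≤ Δ_{M/M/1/2*}` and
`Δ_{M/M/1/2*} ≤ Δ_{M/M/1/2}`. -/
theorem mm1_packet_management_age_comparisons (ρ μ : ℝ) (hρ : 0 < ρ) (hμ : 0 < μ) :
    (1 / μ) * (1 + 1 / ρ) ≤ (1 / μ) * (1 + 1 / ρ + ρ / (1 + ρ)) ∧
    (1 / μ) * (1 + 1 / ρ) ≤
      (1 / μ) * (1 + 1 / ρ +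
        ρ ^ 2 * (1 + 3 * ρ + ρ ^ 2) / ((1 + ρ + ρ ^ 2) * (1 + ρ) ^ 2)) ∧
    (1 / μ) * (1 + 1 / ρ +
        ρ ^ 2 * (1 + 3 * ρ + ρ ^ 2) / ((1 + ρ + ρ ^ 2) * (1 + ρ) ^ 2)) ≤
      (1 / μ) * (1 + 1 / ρ + 2 * ρ ^ 2 / (1 + ρ + ρ ^ 2)) := by
  have hμ' : 0 ≤ 1 / μ := by positivity
  have h1 : (0:ℝ) < 1 + ρ := by linarith
  have h2 : (0:ℝ) < 1 + ρ + ρ ^ 2 := by positivity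
  refine ⟨?_, ?_, ?_⟩
  · apply mul_le_mul_of_nonneg_left _ hμ'
    have : 0 ≤ ρ / (1 + ρ) := by positivity
    linarith
  · apply mul_le_mul_of_nonneg_left _ hμ'
    have : 0 ≤ ρ ^ 2 * (1 + 3 * ρ + ρ ^ 2) / ((1 + ρ + ρ ^ 2) * (1 + ρ) ^ 2) := by positivity
    linarith
  · apply mul_le_mul_of_nonneg_left _ hμ'
    have h3 : ρ ^ 2 * (1 + 3 * ρ + ρ ^ 2) / ((1 + ρ + ρ ^ 2) * (1 + ρ) ^ 2)
        ≤ 2 * ρ ^ 2 / (1 + ρ + ρ ^ 2) := by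
      rw [div_le_div_iff₀ (by positivity) h2]
      nlinarith [mul_nonneg (sq_nonneg ρ) (mul_pos h2 h2).le]
    linarith
end

section
/- Let φ = (1+√5)/2 be the golden ratio. For every μ > 0 and every offered load ρ with 0 < ρ ≤ 1/φ, the M/M/1 packet-management ages satisfy Δ_{M/M/1/2}(ρ) ≤ Δ_{M/M/1/1}(ρ). -/
/-- For offered load `0 < ρ ≤ 1/φ` (with `φ` the golden ratio), the M/M/1/2 age
is at most the M/M/1/1 age. -/
theorem mm12_age_le_mm11_age_low_load (ρ μ : ℝ) (hμ : 0 < μ) (hρ : 0 < ρ)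
    (hρφ : ρ ≤ 1 / ((1 + Real.sqrt 5) / 2)) :
    (1 / μ) * (1 + 1 / ρ + 2 * ρ ^ 2 / (1 + ρ + ρ ^ 2)) ≤
      (1 / μ) * (1 + 1 / ρ + ρ / (1 + ρ)) := by
  have h5 : Real.sqrt 5 ^ 2 = 5 := Real.sq_sqrt (by norm_num)
  have h5' : (1:ℝ) ≤ Real.sqrt 5 := by nlinarith [Real.sqrt_nonneg 5]
  have hφ : (0:ℝ) < (1 + Real.sqrt 5) / 2 := by linarith
  have hkey : ρ ^ 2 + ρ ≤ 1 := by
    rw [le_div_iff₀ hφ] at hρφ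
    nlinarith
  have h1 : (0:ℝ) < 1 + ρ := by linarith
  have h2 : (0:ℝ) < 1 + ρ + ρ ^ 2 := by nlinarith
  have hfrac : 2 * ρ ^ 2 / (1 + ρ + ρ ^ 2) ≤ ρ / (1 + ρ) := by
    rw [div_le_div_iff₀ h2 h1]
    nlinarith
  have := one_div_pos.mpr hμ
  exact mul_le_mul_of_nonneg_left (by linarith) (le_of_lt this)
end

section
/- Let φ = (1+√5)/2 be the golden ratio. For every μ > 0 and every offered load ρ with 1/φ ≤ ρ ≤ φ, the M/M/1 packet-management ages satisfy Δ_{M/M/1/2*}(ρ) ≤ Δ_{M/M/1/1}(ρ) ≤ Δ_{M/M/1/2}(ρ). -/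
/-- For offered load `1/φ ≤ ρ ≤ φ` (with `φ` the golden ratio), the M/M/1/2*
age is at most the M/M/1/1 age, which is at most the M/M/1/2 age. -/
theorem mm11_age_between_mid_load (ρ μ : ℝ) (hμ : 0 < μ)
    (hlo : 1 / ((1 + Real.sqrt 5) / 2) ≤ ρ) (hhi : ρ ≤ (1 + Real.sqrt 5) / 2) :
    (1 / μ) * (1 + 1 / ρ +
        ρ ^ 2 * (1 + 3 * ρ + ρ ^ 2) / ((1 + ρ + ρ ^ 2) * (1 + ρ) ^ 2)) ≤
      (1 / μ) * (1 + 1 / ρ + ρ / (1 + ρ)) ∧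
    (1 / μ) * (1 + 1 / ρ + ρ / (1 + ρ)) ≤
      (1 / μ) * (1 + 1 / ρ + 2 * ρ ^ 2 / (1 + ρ + ρ ^ 2)) := by
  set s := Real.sqrt 5 with hs
  have hs2 : s ^ 2 = 5 := Real.sq_sqrt (by norm_num)
  have hsge : (2 : ℝ) ≤ s := by
    nlinarith [Real.sqrt_nonneg 5]
  have hρ : 0 < ρ := by
    have h1 : (0:ℝ) < 1 / ((1 + s) / 2) := by positivity
    linarith
  have hden1 : (0:ℝ) < 1 + ρ := by linarith
  have hden2 : (0:ℝ) < 1 + ρ + ρ ^ 2 := by positivity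
  have hμ' : (0:ℝ) ≤ 1 / μ := by positivity
  -- translate hlo : (s-1)/2 ≤ ρ
  have hlo' : (s - 1) / 2 ≤ ρ := by
    have h3 : (0:ℝ) < (1 + s) / 2 := by linarith
    rw [div_le_iff₀ h3] at hlo
    nlinarith
  have key1 : 0 ≤ 1 + ρ - ρ ^ 2 := by nlinarith
  have key2 : 0 ≤ ρ ^ 2 + ρ - 1 := by nlinarith
  constructor
  · apply mul_le_mul_of_nonneg_left _ hμ'
    apply add_le_add_right
    rw [div_le_div_iff₀ (by positivity) hden1]
    nlinarith [sq_nonneg ρ, mul_pos hρ hρ]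
  · apply mul_le_mul_of_nonneg_left _ hμ'
    apply add_le_add_right
    rw [div_le_div_iff₀ hden1 hden2]
    nlinarith
end

section
/- Let φ = (1+√5)/2 be the golden ratio. For every μ > 0 and every offered load ρ ≥ φ, the M/M/1 packet-management ages satisfy Δ_{M/M/1/1}(ρ) ≤ Δ_{M/M/1/2*}(ρ). -/
/-- For offered load `ρ ≥ φ` (with `φ` the golden ratio), the M/M/1/1 age is at
most the M/M/1/2* age. -/
theorem mm11_age_le_mm12star_age_high_load (ρ μ : ℝ) (hμ : 0 < μ)
    (hρφ : (1 + Real.sqrt 5) / 2 ≤ ρ) :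
    (1 / μ) * (1 + 1 / ρ + ρ / (1 + ρ)) ≤
      (1 / μ) * (1 + 1 / ρ +
        ρ ^ 2 * (1 + 3 * ρ + ρ ^ 2) / ((1 + ρ + ρ ^ 2) * (1 + ρ) ^ 2)) := by
  have h5 : Real.sqrt 5 ≥ 2 := by
    nlinarith [Real.sq_sqrt (by norm_num : (5:ℝ) ≥ 0), Real.sqrt_nonneg 5]
  have hρ : (3/2 : ℝ) ≤ ρ := by linarith
  have hsq : ρ ^ 2 ≥ ρ + 1 := by
    nlinarith [Real.sq_sqrt (by norm_num : (5:ℝ) ≥ 0), Real.sqrt_nonneg 5]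
  have h1 : ρ / (1 + ρ) ≤ ρ ^ 2 * (1 + 3 * ρ + ρ ^ 2) / ((1 + ρ + ρ ^ 2) * (1 + ρ) ^ 2) := by
    rw [div_le_div_iff₀ (by nlinarith) (by positivity)]
    nlinarith [sq_nonneg ρ]
  have := one_div_pos.mpr hμ
  nlinarith [this.le]
end

section
/- The ε-wait average age function g(ε) = (ε² + 2ε + 8)/(4 + 2ε) satisfies g(0) = 2, g(1/2) = 37/20 = 1.85, and g(ε) < g(0) for every ε ∈ (0, 2). In particular, the zero-wait sampling policy (ε = 0) does not minimize the time-average age. -/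
/-- The ε-wait average age `g(ε) = (ε² + 2ε + 8)/(4 + 2ε)` satisfies `g(0) = 2`,
`g(1/2) = 37/20 = 1.85`, and `g(ε) < g(0)` for every `ε ∈ (0,2)`: the zero-wait
sampling policy does not minimize the time-average age. -/
theorem zero_wait_not_optimal :
    ((0 : ℝ) ^ 2 + 2 * 0 + 8) / (4 + 2 * 0) = 2 ∧
    (((1 : ℝ) / 2) ^ 2 + 2 * (1 / 2) + 8) / (4 + 2 * (1 / 2)) = 37 / 20 ∧
    (∀ ε ∈ Set.Ioo (0 : ℝ) 2,
      (ε ^ 2 + 2 * ε + 8) / (4 + 2 * ε)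
        < ((0 : ℝ) ^ 2 + 2 * 0 + 8) / (4 + 2 * 0)) := by
  refine ⟨by norm_num, by norm_num, fun ε ⟨h0, h2⟩ => ?_⟩
  rw [div_lt_iff₀ (by linarith)]
  nlinarith
end
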